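/- Let Q be a Dynkin quiver of finite type with height function ξ and Coxeter element τ_Q adapted to Q. For each vertex i define γ_i^Q = (1 − τ_Q)ϖ_i, where ϖ_i is the i-th fundamental weight. Then γ_i^Q = Σ_{j ∈ B^Q(i)} (Π_{k=1}^{l_j−1} (−⟨h_{p_k^j}, α_{p_{k+1}^j}⟩)) α_j, where B^Q(i) is the set of vertices j admitting a (necessarily unique) directed path p^j = (j = p_1^j → p_2^j → ... → p_{l_j}^j = i) in Q, and the empty product (case j = i) is 1. -/

import Mathlib

/-- The simple reflection on the weight space associated to the simple root `α i` and the
simple coroot functional `h i`. -/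
def srefl {V : Type*} [AddCommGroup V] [Module ℝ V] {ι : Type*}
    (α : ι → V) (h : ι → V →ₗ[ℝ] ℝ) (i : ι) : Function.End V :=
  fun v => v - h i v • α i

/-- Product of the simple reflections along a word. -/
def wprod {V : Type*} [AddCommGroup V] [Module ℝ V] {ι : Type*}
    (α : ι → V) (h : ι → V →ₗ[ℝ] ℝ) (w : List ι) : Function.End V :=
  (w.map (srefl α h)).prod

/-- `IsDirPath arrow p j i`: `p` is a directed path from `j` to `i` along the relation
`arrow`. -/
def IsDirPath {ι : Type*} (arrow : ι → ι → Prop) (p : List ι) (j i : ι) : Prop :=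
  p ≠ [] ∧ p.head? = some j ∧ p.getLast? = some i ∧ List.Chain' arrow p

/-- The coefficient `∏_k (−⟨h_{p_k}, α_{p_{k+1}}⟩)` of a path (the empty product for a
one-vertex path is `1`; the empty list is assigned `0`). -/
def pathCoef {ι : Type*} (c : ι → ι → ℤ) : List ι → ℤ
  | [] => 0
  | [_] => 1
  | a :: b :: rest => (-(c a b)) * pathCoef c (b :: rest)

namespace Stmt4Aux
variable {ι : Type*}

section paths
variable {A : ι → ι → Prop} {ξ : ι → ℤ}

lemma chain'_xi_getLast (hA : ∀ a b, A a b → ξ a = ξ b + 1) :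
    ∀ (l : List ι) (x b : ι), List.Chain' A (x :: l) →
    (x :: l).getLast? = some b → ξ x = ξ b + l.length := by
  intro l
  induction l with
  | nil => intro x b _ hl; simp at hl; simp [hl]
  | cons y t ih =>
      intro x b hc hl
      unfold List.Chain' at hc; rw [List.isChain_cons_cons] at hc
      have h1 := hA _ _ hc.1
      have h2 := ih y b hc.2 (by simpa using hl)
      simp only [List.length_cons]
      push_cast
      push_cast at h2
      omega

lemma dirpath_xi (hA : ∀ a b, A a b → ξ a = ξ b + 1) {p : List ι} {a b : ι}
    (hp : IsDirPath A p a b) : ξ a = ξ b + p.length - 1 := by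
  obtain ⟨hne, hh, hl, hc⟩ := hp
  obtain ⟨x, t, rfl⟩ := List.exists_cons_of_ne_nil hne
  simp only [List.head?_cons, Option.some.injEq] at hh
  subst hh
  have := chain'_xi_getLast hA t x b hc hl
  simp only [List.length_cons]
  push_cast
  omega

lemma dirpath_xi_le (hA : ∀ a b, A a b → ξ a = ξ b + 1) {p : List ι} {a b : ι}
    (hp : IsDirPath A p a b) : ξ b ≤ ξ a := by
  have h1 := dirpath_xi hA hp
  have h2 : 0 < p.length := List.length_pos_iff.mpr hp.1
  have : (1:ℤ) ≤ p.length := by exact_mod_cast h2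
  omega

lemma dirpath_self (hA : ∀ a b, A a b → ξ a = ξ b + 1) {p : List ι} {a b : ι}
    (hp : IsDirPath A p a b) (hab : ξ a = ξ b) : p = [a] := by
  have hx := dirpath_xi hA hp
  have hlen : p.length = 1 := by
    have h2 : 0 < p.length := List.length_pos_iff.mpr hp.1
    have : (p.length : ℤ) = 1 := by omega
    exact_mod_cast this
  obtain ⟨x, hxp⟩ := List.length_eq_one_iff.mp hlen
  subst hxp
  have := hp.2.1
  simp only [List.head?_cons, Option.some.injEq] at this
  rw [this]

lemma dirpath_cons {k a b : ι} {p : List ι} (hk : A k a) (hp : IsDirPath A p a b) :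
    IsDirPath A (k :: p) k b := by
  obtain ⟨hne, hh, hl, hc⟩ := hp
  refine ⟨by simp, by simp, ?_, ?_⟩
  · rw [List.getLast?_cons, hl]; rfl
  · unfold List.Chain'; rw [List.isChain_cons]
    refine ⟨fun y hy => ?_, hc⟩
    rw [hh] at hy
    obtain rfl : a = y := by simpa using hy
    exact hk

lemma dirpath_tail {x y a b : ι} {t : List ι} (hp : IsDirPath A (x :: y :: t) a b) :
    a = x ∧ A x y ∧ IsDirPath A (y :: t) y b := by
  obtain ⟨hne, hh, hl, hc⟩ := hp
  simp only [List.head?_cons, Option.some.injEq] at hh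
  unfold List.Chain' at hc; rw [List.isChain_cons_cons] at hc
  refine ⟨hh.symm, hc.1, by simp, by simp, ?_, hc.2⟩
  rwa [List.getLast?_cons_cons] at hl

lemma dirpath_dropLast {p : List ι} {a b : ι}
    (hp : IsDirPath A p a b) (h2 : 2 ≤ p.length) :
    ∃ v, A v b ∧ IsDirPath A p.dropLast a v ∧ p = p.dropLast ++ [b] := by
  obtain ⟨hne, hh, hl, hc⟩ := hp
  have hlast : p.getLast hne = b := by
    rw [List.getLast?_eq_getLast hne] at hl; exact Option.some.inj hl
  have hdec : p.dropLast ++ [b] = p := by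
    rw [← hlast]; exact List.dropLast_concat_getLast hne
  have hdne : p.dropLast ≠ [] := by
    have : p.dropLast.length = p.length - 1 := List.length_dropLast
    intro h0
    rw [h0] at this
    simp at this
    omega
  refine ⟨p.dropLast.getLast hdne, ?_, ⟨hdne, ?_, List.getLast?_eq_getLast hdne, ?_⟩, hdec.symm⟩
  · rw [← hdec] at hc
    unfold List.Chain' at hc; rw [List.isChain_append] at hc
    exact hc.2.2 _ (List.getLast?_eq_getLast hdne) b rfl
  · rw [← hdec] at hh
    rwa [List.head?_append_of_ne_nil _ hdne] at hh
  · rw [← hdec] at hc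
    unfold List.Chain' at hc; rw [List.isChain_append] at hc
    exact hc.1

lemma chain'_pairwise (hA : ∀ a b, A a b → ξ a = ξ b + 1) {l : List ι}
    (hc : List.Chain' A l) : l.Pairwise (fun u v => ξ v < ξ u) := by
  haveI : IsTrans ι (fun u v : ι => ξ v < ξ u) := ⟨fun a b c h1 h2 => h2.trans h1⟩
  exact List.isChain_iff_pairwise.mp (hc.imp fun a b hab => by have := hA a b hab; omega)

lemma mem_chain'_in {l : List ι} (hc : List.Chain' A l) {u : ι} (hu : u ∈ l)
    (hh : l.head? ≠ some u) : ∃ v ∈ l, A v u := by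
  induction l with
  | nil => simp at hu
  | cons x t ih =>
      simp only [List.head?_cons, ne_eq, Option.some.injEq] at hh
      have hut : u ∈ t := by
        rcases List.mem_cons.mp hu with rfl | h
        · exact (hh rfl).elim
        · exact h
      match t, hut with
      | y :: t', hut =>
        unfold List.Chain' at hc; rw [List.isChain_cons_cons] at hc
        by_cases huy : u = y
        · exact ⟨x, List.mem_cons_self, huy ▸ hc.1⟩
        · obtain ⟨v, hv, hAv⟩ := ih hc.2 hut (by
            simp only [List.head?_cons, ne_eq, Option.some.injEq]
            exact fun hhh => huy hhh.symm)
          exact ⟨v, List.mem_cons_of_mem _ hv, hAv⟩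

lemma mem_chain'_out {l : List ι} (hc : List.Chain' A l) {u : ι} (hu : u ∈ l)
    (hl : l.getLast? ≠ some u) : ∃ v ∈ l, A u v := by
  induction l with
  | nil => simp at hu
  | cons x t ih =>
      match t with
      | [] =>
          simp only [List.getLast?_singleton, ne_eq, Option.some.injEq] at hl
          simp only [List.mem_singleton] at hu
          exact (hl hu.symm).elim
      | y :: t' =>
          unfold List.Chain' at hc; rw [List.isChain_cons_cons] at hc
          rcases List.mem_cons.mp hu with rfl | h
          · exact ⟨y, by simp, hc.1⟩
          · rw [List.getLast?_cons_cons] at hl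
            obtain ⟨v, hv, hAv⟩ := ih hc.2 h hl
            exact ⟨v, List.mem_cons_of_mem _ hv, hAv⟩

end paths
end Stmt4Aux

section cycle
variable [Fintype ι] [DecidableEq ι]

open Stmt4Aux

lemma cycle_contra (c : ι → ι → ℤ)
    (hdiag : ∀ i, c i i = 2) (hoffd : ∀ i j, i ≠ j → c i j ≤ 0)
    (d : ι → ℝ) (hd : ∀ i, 0 < d i)
    (hpos : Matrix.PosDef (Matrix.of fun i j => d i * (c i j : ℝ)))
    (T : Finset ι) (hne : T.Nonempty)
    (hdeg : ∀ u ∈ T, ∃ v₁ ∈ T, ∃ v₂ ∈ T, v₁ ≠ v₂ ∧ v₁ ≠ u ∧ v₂ ≠ u ∧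
      c u v₁ ≠ 0 ∧ c u v₂ ≠ 0) : False := by
  classical
  set x : ι → ℝ := fun v => if v ∈ T then 1 else 0 with hx
  have hxne : x ≠ 0 := by
    obtain ⟨a, ha⟩ := hne
    intro h0
    have : x a = 0 := by rw [h0]; rfl
    rw [hx] at this
    simp [ha] at this
  have hposx := hpos.dotProduct_mulVec_pos hxne
  have hstar : star x = x := by
    funext v; simp [hx]
  rw [hstar] at hposx
  have hval : dotProduct x ((Matrix.of fun i j => d i * (c i j : ℝ)).mulVec x) =
      ∑ u ∈ T, ∑ v ∈ T, d u * (c u v : ℝ) := by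
    rw [dotProduct]
    rw [← Finset.sum_subset (Finset.subset_univ T) (by
      intro u _ hu
      have : x u = 0 := by simp [hx, hu]
      rw [this, zero_mul])]
    refine Finset.sum_congr rfl fun u hu => ?_
    have hxu : x u = 1 := by simp [hx, hu]
    rw [hxu, one_mul, Matrix.mulVec, dotProduct]
    rw [← Finset.sum_subset (Finset.subset_univ T) (by
      intro v _ hv
      have : x v = 0 := by simp [hx, hv]
      rw [this, mul_zero])]
    refine Finset.sum_congr rfl fun v hv => ?_
    have : x v = 1 := by simp [hx, hv]
    rw [this, mul_one]
    rfl
  rw [hval] at hposx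
  have hle : ∑ u ∈ T, ∑ v ∈ T, d u * (c u v : ℝ) ≤ 0 := by
    refine Finset.sum_nonpos fun u hu => ?_
    obtain ⟨v₁, hv₁, v₂, hv₂, h12, h1u, h2u, hc1, hc2⟩ := hdeg u hu
    have hsplit : ∑ v ∈ T, d u * (c u v : ℝ) = d u * (c u u : ℝ) +
        ∑ v ∈ T.erase u, d u * (c u v : ℝ) := (Finset.add_sum_erase T _ hu).symm
    have hpair : ({v₁, v₂} : Finset ι) ⊆ T.erase u := by
      intro v hv
      simp only [Finset.mem_insert, Finset.mem_singleton] at hv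
      rcases hv with rfl | rfl
      · exact Finset.mem_erase.mpr ⟨h1u, hv₁⟩
      · exact Finset.mem_erase.mpr ⟨h2u, hv₂⟩
    have hbound : ∑ v ∈ T.erase u, d u * (c u v : ℝ) ≤
        ∑ v ∈ ({v₁, v₂} : Finset ι), d u * (c u v : ℝ) := by
      have := Finset.sum_le_sum_of_subset_of_nonneg (f := fun v => -(d u * (c u v : ℝ)))
        hpair (by
          intro v hvT hvnot
          have hvne : v ≠ u := (Finset.mem_erase.mp hvT).1
          have : (c u v : ℝ) ≤ 0 := by exact_mod_cast hoffd u v (Ne.symm hvne)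
          show (0:ℝ) ≤ -(d u * (c u v : ℝ))
          nlinarith [hd u])
      simpa using this
    have hsum2 : ∑ v ∈ ({v₁, v₂} : Finset ι), d u * (c u v : ℝ) ≤ -(2 * d u) := by
      rw [Finset.sum_pair h12]
      have e1 : c u v₁ ≤ -1 := by have := hoffd u v₁ (Ne.symm h1u); omega
      have e2 : c u v₂ ≤ -1 := by have := hoffd u v₂ (Ne.symm h2u); omega
      have e1' : (c u v₁ : ℝ) ≤ -1 := by exact_mod_cast e1
      have e2' : (c u v₂ : ℝ) ≤ -1 := by exact_mod_cast e2
      nlinarith [hd u]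
    rw [hsplit, hdiag u]
    push_cast
    nlinarith [hd u]
  linarith
end cycle

section uniq
variable [Fintype ι] [DecidableEq ι]
open Stmt4Aux

lemma dirpath_unique (c : ι → ι → ℤ) (ξ : ι → ℤ)
    (hdiag : ∀ i, c i i = 2) (hoffd : ∀ i j, i ≠ j → c i j ≤ 0)
    (hzsym : ∀ i j, c i j = 0 ↔ c j i = 0)
    (d : ι → ℝ) (hd : ∀ i, 0 < d i)
    (hpos : Matrix.PosDef (Matrix.of fun i j => d i * (c i j : ℝ))) :
    ∀ (n : ℕ) (p q : List ι) (a b : ι), p.length + q.length ≤ n →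
      IsDirPath (fun a b => a ≠ b ∧ c a b ≠ 0 ∧ ξ a = ξ b + 1) p a b →
      IsDirPath (fun a b => a ≠ b ∧ c a b ≠ 0 ∧ ξ a = ξ b + 1) q a b → p = q := by
  set A : ι → ι → Prop := fun a b => a ≠ b ∧ c a b ≠ 0 ∧ ξ a = ξ b + 1 with hAdef
  have hA : ∀ a b, A a b → ξ a = ξ b + 1 := fun _ _ hh => hh.2.2
  intro n
  induction n with
  | zero =>
      intro p q a b hlen hp _
      have := List.length_pos_iff.mpr hp.1
      omega
  | succ n ih =>
      intro p q a b hlen hp hq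
      obtain ⟨x, p', rfl⟩ := List.exists_cons_of_ne_nil hp.1
      obtain rfl : a = x := by
        have := hp.2.1; simp only [List.head?_cons, Option.some.injEq] at this; exact this.symm
      obtain ⟨y, q', rfl⟩ := List.exists_cons_of_ne_nil hq.1
      obtain rfl : a = y := by
        have := hq.2.1; simp only [List.head?_cons, Option.some.injEq] at this; exact this.symm
      rcases p' with - | ⟨j₁, t₁⟩
      · obtain rfl : a = b := by
          have := hp.2.2.1; simpa using this
        exact (dirpath_self hA hq rfl).symm
      rcases q' with - | ⟨j₂, t₂⟩
      · obtain rfl : a = b := by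
          have := hq.2.2.1; simpa using this
        exact dirpath_self hA hp rfl
      · obtain ⟨-, hAj₁, hp'⟩ := dirpath_tail hp
        obtain ⟨-, hAj₂, hq'⟩ := dirpath_tail hq
        by_cases hj : j₁ = j₂
        · subst hj
          have := ih (j₁ :: t₁) (j₁ :: t₂) j₁ b (by simp at hlen ⊢; omega) hp' hq'
          rw [this]
        · exfalso
          set p : List ι := a :: j₁ :: t₁ with hpdef
          set q : List ι := a :: j₂ :: t₂ with hqdef
          set T : Finset ι := (p ++ q).toFinset with hTdef
          have hmemT : ∀ u, u ∈ p ∨ u ∈ q → u ∈ T := by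
            intro u hu
            rw [hTdef, List.mem_toFinset, List.mem_append]
            exact hu
          -- interior vertices of a path from a to b have two neighbors in the path
          have key : ∀ (r : List ι), IsDirPath A r a b → r ⊆ (p ++ q) → ∀ u ∈ r, u ≠ a → u ≠ b →
              ∃ v₁ ∈ T, ∃ v₂ ∈ T, v₁ ≠ v₂ ∧ v₁ ≠ u ∧ v₂ ≠ u ∧ c u v₁ ≠ 0 ∧ c u v₂ ≠ 0 := by
            intro r hr hsub u hu hua hub
            obtain ⟨v, hv, hAv⟩ := mem_chain'_in hr.2.2.2 hu (by
              rw [hr.2.1]; intro hh; exact hua (Option.some.inj hh).symm)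
            obtain ⟨e, he, hAe⟩ := mem_chain'_out hr.2.2.2 hu (by
              rw [hr.2.2.1]; intro hh; exact hub (Option.some.inj hh).symm)
            refine ⟨v, hmemT v (List.mem_append.mp (hsub hv)), e,
              hmemT e (List.mem_append.mp (hsub he)), ?_, ?_, ?_, ?_, ?_⟩
            · intro hh
              have h1 := hA _ _ hAv
              have h2 := hA _ _ hAe
              rw [hh] at h1; omega
            · exact hAv.1
            · exact fun hh => hAe.1 hh.symm
            · exact fun hh => hAv.2.1 ((hzsym u v).mp hh)
            · exact hAe.2.1
          have hdeg : ∀ u ∈ T, ∃ v₁ ∈ T, ∃ v₂ ∈ T, v₁ ≠ v₂ ∧ v₁ ≠ u ∧ v₂ ≠ u ∧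
              c u v₁ ≠ 0 ∧ c u v₂ ≠ 0 := by
            intro u huT
            by_cases hua : u = a
            · subst hua
              refine ⟨j₁, hmemT j₁ (Or.inl (by simp [hpdef])), j₂,
                hmemT j₂ (Or.inr (by simp [hqdef])), hj, fun hh => hAj₁.1 hh.symm,
                fun hh => hAj₂.1 hh.symm, hAj₁.2.1, hAj₂.2.1⟩
            by_cases hub : u = b
            · subst hub
              obtain ⟨v₁, hAv₁, hdp, hpe⟩ := dirpath_dropLast hp (by simp [hpdef])
              obtain ⟨v₂, hAv₂, hdq, hqe⟩ := dirpath_dropLast hq (by simp [hqdef])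
              have hv₁m : v₁ ∈ p := by
                rw [hpe, List.mem_append]
                left
                have := hdp.2.2.1
                exact List.mem_of_mem_getLast? this
              have hv₂m : v₂ ∈ q := by
                rw [hqe, List.mem_append]
                left
                have := hdq.2.2.1
                exact List.mem_of_mem_getLast? this
              have hvne : v₁ ≠ v₂ := by
                intro hh
                subst hh
                have heq := ih p.dropLast q.dropLast a v₁ (by
                  have h1 : p.dropLast.length = p.length - 1 := List.length_dropLast
                  have h2 : q.dropLast.length = q.length - 1 := List.length_dropLast
                  have h3 : 2 ≤ p.length := by simp [hpdef]
                  have h4 : 2 ≤ q.length := by simp [hqdef]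
                  omega) hdp hdq
                have : p = q := by rw [hpe, hqe, heq]
                rw [hpdef, hqdef] at this
                simp at this
                exact hj this.1
              exact ⟨v₁, hmemT v₁ (Or.inl hv₁m), v₂, hmemT v₂ (Or.inr hv₂m), hvne,
                hAv₁.1, hAv₂.1, fun hh => hAv₁.2.1 ((hzsym u v₁).mp hh),
                fun hh => hAv₂.2.1 ((hzsym u v₂).mp hh)⟩
            · rw [hTdef, List.mem_toFinset, List.mem_append] at huT
              rcases huT with hup | huq
              · exact key p hp (List.subset_append_left _ _) u hup hua hub
              · exact key q hq (List.subset_append_right _ _) u huq hua hub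
          exact cycle_contra c hdiag hoffd d hd hpos T
            ⟨a, hmemT a (Or.inl (by simp [hpdef]))⟩ hdeg

end uniq

section rec
variable [Fintype ι] [DecidableEq ι]
open Stmt4Aux

lemma coef_rec (c : ι → ι → ℤ) (ξ : ι → ℤ)
    (hdiag : ∀ i, c i i = 2) (hoffd : ∀ i j, i ≠ j → c i j ≤ 0)
    (hzsym : ∀ i j, c i j = 0 ↔ c j i = 0)
    (d : ι → ℝ) (hd : ∀ i, 0 < d i)
    (hpos : Matrix.PosDef (Matrix.of fun i j => d i * (c i j : ℝ)))
    (i : ι) (P : ι → List ι)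
    (hP : ∀ j, (∃ p, IsDirPath (fun a b => a ≠ b ∧ c a b ≠ 0 ∧ ξ a = ξ b + 1) p j i) →
      IsDirPath (fun a b => a ≠ b ∧ c a b ≠ 0 ∧ ξ a = ξ b + 1) (P j) j i)
    (hP0 : ∀ j, ¬ (∃ p, IsDirPath (fun a b => a ≠ b ∧ c a b ≠ 0 ∧ ξ a = ξ b + 1) p j i) →
      P j = [])
    (k : ι) :
    pathCoef c (P k) = (if k = i then 1 else 0) -
      ∑ j ∈ Finset.univ.filter (fun j => k ≠ j ∧ c k j ≠ 0 ∧ ξ k = ξ j + 1),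
        pathCoef c (P j) * c k j := by
  classical
  set A : ι → ι → Prop := fun a b => a ≠ b ∧ c a b ≠ 0 ∧ ξ a = ξ b + 1 with hAdef
  have hA : ∀ a b, A a b → ξ a = ξ b + 1 := fun _ _ hh => hh.2.2
  by_cases hk : k = i
  · subst hk
    have hPi : P k = [k] := by
      have hex : ∃ p, IsDirPath A p k k := ⟨[k], by simp, by simp, by simp, List.isChain_singleton _⟩
      exact dirpath_self hA (hP k hex) rfl
    rw [hPi]
    have hz : ∀ j ∈ Finset.univ.filter (fun j => k ≠ j ∧ c k j ≠ 0 ∧ ξ k = ξ j + 1),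
        pathCoef c (P j) * c k j = 0 := by
      intro j hj
      rw [Finset.mem_filter] at hj
      have hPj : P j = [] := by
        apply hP0
        rintro ⟨p, hp⟩
        have := dirpath_xi_le hA hp
        omega
      rw [hPj]
      simp [pathCoef]
    rw [Finset.sum_eq_zero hz]
    simp [pathCoef]
  · by_cases hex : ∃ p, IsDirPath A p k i
    · have hPk := hP k hex
      obtain ⟨x, t, hxt⟩ := List.exists_cons_of_ne_nil hPk.1
      obtain rfl : k = x := by
        have := hPk.2.1; rw [hxt] at this
        simp only [List.head?_cons, Option.some.injEq] at this; exact this.symm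
      rcases t with - | ⟨j₀, t'⟩
      · exfalso
        have := hPk.2.2.1
        rw [hxt] at this
        simp only [List.getLast?_singleton, Option.some.injEq] at this
        exact hk this
      rw [hxt] at hPk
      obtain ⟨-, hAj₀, hp'⟩ := dirpath_tail hPk
      have hPj₀ : P j₀ = j₀ :: t' := by
        have h1 := hP j₀ ⟨j₀ :: t', hp'⟩
        exact dirpath_unique c ξ hdiag hoffd hzsym d hd hpos
          ((P j₀).length + (j₀ :: t').length) (P j₀) (j₀ :: t') j₀ i le_rfl h1 hp'
      have hsum : ∑ j ∈ Finset.univ.filter (fun j => k ≠ j ∧ c k j ≠ 0 ∧ ξ k = ξ j + 1),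
          pathCoef c (P j) * c k j = pathCoef c (P j₀) * c k j₀ := by
        apply Finset.sum_eq_single j₀
        · intro j hj hne
          rw [Finset.mem_filter] at hj
          have hPj : P j = [] := by
            apply hP0
            rintro ⟨p, hp⟩
            have hcons := dirpath_cons (show A k j from hj.2) (hP j ⟨p, hp⟩)
            have := dirpath_unique c ξ hdiag hoffd hzsym d hd hpos
              ((k :: P j).length + (k :: j₀ :: t').length) (k :: P j) (k :: j₀ :: t')
              k i le_rfl hcons (hxt ▸ hPk)
            have hhd : (P j).head? = some j := (hP j ⟨p, hp⟩).2.1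
            have : P j = j₀ :: t' := by injection this
            rw [this] at hhd
            simp only [List.head?_cons, Option.some.injEq] at hhd
            exact hne hhd.symm
          rw [hPj]
          simp [pathCoef]
        · intro habs
          exact absurd (Finset.mem_filter.mpr ⟨Finset.mem_univ _, hAj₀⟩) habs
      rw [hsum, hxt, hPj₀, if_neg hk]
      show -c k j₀ * pathCoef c (j₀ :: t') = 0 - pathCoef c (j₀ :: t') * c k j₀
      ring
    · have hPk : P k = [] := hP0 k hex
      have hz : ∀ j ∈ Finset.univ.filter (fun j => k ≠ j ∧ c k j ≠ 0 ∧ ξ k = ξ j + 1),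
          pathCoef c (P j) * c k j = 0 := by
        intro j hj
        rw [Finset.mem_filter] at hj
        have hPj : P j = [] := by
          apply hP0
          rintro ⟨p, hp⟩
          exact hex ⟨k :: p, dirpath_cons (show A k j from hj.2) hp⟩
        rw [hPj]
        simp [pathCoef]
      rw [Finset.sum_eq_zero hz, hPk, if_neg hk]
      simp [pathCoef]
end rec

/-- For a Dynkin quiver `Q` of finite type with height function `ξ` and adapted Coxeter
element `τ_Q`, one has `γ_i^Q = (1 − τ_Q)ϖ_i = ∑_{j ∈ B^Q(i)} (∏ (−⟨h_{p_k^j}, α_{p_{k+1}^j}⟩)) α_j`,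
summing over vertices `j` admitting a directed path `P j` to `i` in `Q`. -/
theorem stmt4 {V : Type*} [AddCommGroup V] [Module ℝ V] {ι : Type*} [Fintype ι]
    [DecidableEq ι]
    (c : ι → ι → ℤ)
    (hdiag : ∀ i, c i i = 2)
    (hoffd : ∀ i j, i ≠ j → c i j ≤ 0)
    (hzsym : ∀ i j, c i j = 0 ↔ c j i = 0)
    (d : ι → ℝ) (hd : ∀ i, 0 < d i)
    (hdc : ∀ i j, d i * (c i j : ℝ) = d j * (c j i : ℝ))
    (hpos : Matrix.PosDef (Matrix.of fun i j => d i * (c i j : ℝ)))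
    (α : ι → V) (h : ι → V →ₗ[ℝ] ℝ) (ϖ : ι → V)
    (hhα : ∀ i j, h i (α j) = (c i j : ℝ))
    (hhϖ : ∀ i j, h i (ϖ j) = if i = j then 1 else 0)
    (ξ : ι → ℤ)
    (hξ : ∀ i j, i ≠ j → c i j ≠ 0 → ξ i = ξ j + 1 ∨ ξ j = ξ i + 1)
    (w : List ι) (hwnd : w.Nodup) (hwall : ∀ i, i ∈ w)
    (hadapt : ∀ i j, i ≠ j → c i j ≠ 0 → ξ i = ξ j + 1 → w.idxOf i < w.idxOf j)
    (i : ι) (P : ι → List ι)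
    (hP : ∀ j, (∃ p, IsDirPath (fun a b => a ≠ b ∧ c a b ≠ 0 ∧ ξ a = ξ b + 1) p j i) →
      IsDirPath (fun a b => a ≠ b ∧ c a b ≠ 0 ∧ ξ a = ξ b + 1) (P j) j i)
    (hP0 : ∀ j, ¬ (∃ p, IsDirPath (fun a b => a ≠ b ∧ c a b ≠ 0 ∧ ξ a = ξ b + 1) p j i) →
      P j = []) :
    ϖ i - wprod α h w (ϖ i) = ∑ j : ι, (pathCoef c (P j) : ℝ) • α j := by
  classical
  have key : ∀ u : List ι, u <:+ w →
      wprod α h u (ϖ i) = ϖ i - ∑ j ∈ u.toFinset, (pathCoef c (P j) : ℝ) • α j := by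
    intro u
    induction u with
    | nil => intro _; simp [wprod]; rfl
    | cons k rest ih =>
        intro hu
        obtain ⟨s, hs⟩ := hu
        have hrest : rest <:+ w := ⟨s ++ [k], by simpa using hs⟩
        have ihr := ih hrest
        have hnd : (s ++ k :: rest).Nodup := by rw [hs]; exact hwnd
        have hkrnd : (k :: rest).Nodup := hnd.of_append_right
        have hknr : k ∉ rest := (List.nodup_cons.mp hkrnd).1
        have hdisj : s.Disjoint (k :: rest) := List.disjoint_of_nodup_append hnd
        have hks : k ∉ s := fun hh => hdisj hh (List.mem_cons_self)
        have hidxk : w.idxOf k = s.length := by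
          rw [← hs, List.idxOf_append_of_notMem hks, List.idxOf_cons_self, Nat.add_zero]
        have hmemrest : ∀ j, k ≠ j → c k j ≠ 0 → ξ k = ξ j + 1 → j ∈ rest := by
          intro j h1 h2 h3
          have hij := hadapt k j h1 h2 h3
          have hjw : j ∈ s ++ k :: rest := by rw [hs]; exact hwall j
          rcases List.mem_append.mp hjw with hjs | hjkr
          · exfalso
            have : w.idxOf j = s.idxOf j := by
              rw [← hs, List.idxOf_append_of_mem hjs]
            have hlt : s.idxOf j < s.length := List.idxOf_lt_length_iff.mpr hjs
            omega
          · rcases List.mem_cons.mp hjkr with rfl | hjr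
            · exact absurd rfl h1
            · exact hjr
        have hnotrev : ∀ j ∈ rest, ¬ (j ≠ k ∧ c j k ≠ 0 ∧ ξ j = ξ k + 1) := by
          rintro j hj ⟨h1, h2, h3⟩
          have hij := hadapt j k h1 h2 h3
          have hjns : j ∉ s := fun hh => hdisj hh (List.mem_cons_of_mem _ hj)
          have : w.idxOf j = s.length + (k :: rest).idxOf j := by
            rw [← hs, List.idxOf_append_of_notMem hjns]
          have h4 : (k :: rest).idxOf j = rest.idxOf j + 1 := by
            rw [List.idxOf_cons_ne _ (by exact fun hh => h1 (hh.symm))]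
          omega
        -- scalar identity
        have hrec := coef_rec c ξ hdiag hoffd hzsym d hd hpos i P hP hP0 k
        have hsum_eq : ∑ j ∈ Finset.univ.filter (fun j => k ≠ j ∧ c k j ≠ 0 ∧ ξ k = ξ j + 1),
            pathCoef c (P j) * c k j = ∑ j ∈ rest.toFinset, pathCoef c (P j) * c k j := by
          apply Finset.sum_subset
          · intro j hj
            rw [Finset.mem_filter] at hj
            exact List.mem_toFinset.mpr (hmemrest j hj.2.1 hj.2.2.1 hj.2.2.2)
          · intro j hj hnotf
            have hjr : j ∈ rest := List.mem_toFinset.mp hj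
            have hjk : j ≠ k := fun hh => hknr (hh ▸ hjr)
            by_cases hcz : c k j = 0
            · rw [hcz, mul_zero]
            · exfalso
              rcases hξ k j (fun hh => hjk hh.symm) hcz with hkj | hjkc
              · exact hnotf (Finset.mem_filter.mpr
                  ⟨Finset.mem_univ _, fun hh => hjk hh.symm, hcz, hkj⟩)
              · exact hnotrev j hjr ⟨hjk, fun hh => hcz ((hzsym k j).mpr hh), hjkc⟩
        have hrec' : pathCoef c (P k) = (if k = i then 1 else 0) -
            ∑ j ∈ rest.toFinset, pathCoef c (P j) * c k j := by
          rw [hrec, hsum_eq]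
        have hscal : (pathCoef c (P k) : ℝ) = (if k = i then (1:ℝ) else 0) -
            ∑ j ∈ rest.toFinset, (pathCoef c (P j) : ℝ) * (c k j : ℝ) := by
          exact_mod_cast hrec'
        -- vector computation
        have h1 : wprod α h (k :: rest) (ϖ i) = srefl α h k (wprod α h rest (ϖ i)) := rfl
        rw [h1, ihr]
        have h2 : srefl α h k (ϖ i - ∑ j ∈ rest.toFinset, (pathCoef c (P j) : ℝ) • α j) =
            (ϖ i - ∑ j ∈ rest.toFinset, (pathCoef c (P j) : ℝ) • α j) -
            (h k (ϖ i - ∑ j ∈ rest.toFinset, (pathCoef c (P j) : ℝ) • α j)) • α k := rfl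
        rw [h2]
        have h3 : h k (ϖ i - ∑ j ∈ rest.toFinset, (pathCoef c (P j) : ℝ) • α j) =
            (if k = i then (1:ℝ) else 0) -
            ∑ j ∈ rest.toFinset, (pathCoef c (P j) : ℝ) * (c k j : ℝ) := by
          rw [map_sub, map_sum]
          congr 1
          · exact hhϖ k i
          · refine Finset.sum_congr rfl fun j _ => ?_
            rw [map_smul, hhα, smul_eq_mul]
        rw [h3, ← hscal, List.toFinset_cons, Finset.sum_insert (by
          rw [List.mem_toFinset]; exact hknr)]
        abel
  have hw := key w (List.suffix_refl w)
  rw [hw]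
  have huniv : w.toFinset = Finset.univ :=
    Finset.eq_univ_iff_forall.mpr (fun j => List.mem_toFinset.mpr (hwall j))
  rw [huniv]
  abel
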